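/- Let (G,g) be a connected weighted graph and let d ≥ 1. Then, up to isomorphism, there are only finitely many unramified finite harmonic morphisms φ : (G′,g′) → (G,g) of degree d with G′ connected. Here two such morphisms φ_1 : G′_1 → G and φ_2 : G′_2 → G are isomorphic if there is an isomorphism of weighted graphs α : G′_1 → G′_2 with φ_2∘α = φ_1 and d_{φ_2}∘α = d_{φ_1}. -/
import Mathlib


namespace TropDR

open Finset

/-- `Finset.filter` with classical decidability. -/
noncomputable def cfilter {α : Type*} (p : α → Prop) (s : Finset α) : Finset α :=
  @Finset.filter α p (Classical.decPred p) s

/-- A graph with legs: a finite set `X` together with an idempotent root map `rt`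
and an involution `inv` fixing every root vertex. -/
structure PGraph where
  X : Type
  [fintypeX : Fintype X]
  [decEqX : DecidableEq X]
  rt : X → X
  inv : X → X
  rt_idem : ∀ x, rt (rt x) = rt x
  inv_invol : ∀ x, inv (inv x) = x
  inv_fix_rt : ∀ x, inv (rt x) = rt x

attribute [instance] PGraph.fintypeX PGraph.decEqX

namespace PGraph

variable (G : PGraph)

/-- Vertices are the fixed points (= the image) of the root map. -/
def IsVertex (x : G.X) : Prop := G.rt x = x

/-- Half-edges are the non-vertices. -/
def IsHalf (x : G.X) : Prop := G.rt x ≠ x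

/-- Legs are the `inv`-fixed half-edges. -/
def IsLeg (x : G.X) : Prop := G.IsHalf x ∧ G.inv x = x

/-- Halves of genuine edges: half-edges moved by the involution. -/
def IsEdgeHalf (x : G.X) : Prop := G.IsHalf x ∧ G.inv x ≠ x

noncomputable def vertexSet : Finset G.X := cfilter (fun x => G.IsVertex x) Finset.univ

noncomputable def legSet : Finset G.X := cfilter (fun x => G.IsLeg x) Finset.univ

noncomputable def edgeHalfSet : Finset G.X := cfilter (fun x => G.IsEdgeHalf x) Finset.univ

/-- Tangent directions at a vertex `v`: half-edges rooted at `v`. -/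
noncomputable def tangents (v : G.X) : Finset G.X :=
  cfilter (fun h => G.IsHalf h ∧ G.rt h = v) Finset.univ

noncomputable def valence (v : G.X) : ℕ := (G.tangents v).card

/-- The number of edges: half the number of edge half-edges. -/
noncomputable def numEdges : ℕ := G.edgeHalfSet.card / 2

noncomputable def numLegs : ℕ := G.legSet.card

noncomputable def numVertices : ℕ := G.vertexSet.card

/-- Connectedness: the equivalence relation generated by `x ∼ rt x` and `x ∼ inv x`
has a single class (and `X` is nonempty). -/
def Connected : Prop :=
  Nonempty G.X ∧ ∀ x y : G.X, Relation.EqvGen (fun a b => G.rt a = b ∨ G.inv a = b) x y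

/-- A subgraph: a subset of `X` closed under the root map and the involution. -/
def IsSubgraph (F : Finset G.X) : Prop :=
  (∀ x ∈ F, G.rt x ∈ F) ∧ (∀ x ∈ F, G.inv x ∈ F)

/-- Valency of `v` inside a subgraph `F`. -/
noncomputable def valIn (F : Finset G.X) (v : G.X) : ℕ := (G.tangents v ∩ F).card

end PGraph

/-- A morphism of graphs: commutes with the root maps and involutions,
and maps no edge into a leg. -/
structure GraphHom (G' G : PGraph) where
  toFun : G'.X → G.X
  map_rt : ∀ x, toFun (G'.rt x) = G.rt (toFun x)
  map_inv : ∀ x, toFun (G'.inv x) = G.inv (toFun x)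
  edge_not_leg : ∀ h, G'.IsEdgeHalf h → ¬ G.IsLeg (toFun h)

/-- A harmonic morphism of graphs: a graph morphism together with a degree function. -/
structure HarmonicHom (G' G : PGraph) extends GraphHom G' G where
  deg : G'.X → ℕ
  deg_edge : ∀ h, G'.IsEdgeHalf h → deg (G'.inv h) = deg h
  deg_zero_iff : ∀ h, G'.IsHalf h → (deg h = 0 ↔ G.IsVertex (toFun h))
  harmonic : ∀ v', G'.IsVertex v' → ∀ h, G.IsHalf h → G.rt h = toFun v' →
    deg v' = ∑ h' ∈ cfilter (fun h' => toFun h' = h) (G'.tangents v'), deg h'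

namespace HarmonicHom

variable {G' G : PGraph} (φ : HarmonicHom G' G)

/-- A harmonic morphism is finite if it has positive degree on every half-edge. -/
def Finite : Prop := ∀ h, G'.IsHalf h → 0 < φ.deg h

/-- The sum of the degrees over the vertex fiber of `v`. -/
noncomputable def vertexFiberDeg (v : G.X) : ℕ :=
  ∑ v' ∈ cfilter (fun v' => φ.toFun v' = v) G'.vertexSet, φ.deg v'

end HarmonicHom

/-- A weighted graph: a graph together with a genus function on (all elements;
only the values at vertices are relevant). -/
structure WGraph extends PGraph where
  gw : X → ℕ

namespace WGraph

variable (G : WGraph)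

/-- The genus of a (connected) weighted graph. -/
noncomputable def genus : ℤ :=
  (G.toPGraph.numEdges : ℤ) - (G.toPGraph.numVertices : ℤ) + 1 +
    ∑ v ∈ G.toPGraph.vertexSet, (G.gw v : ℤ)

/-- The Euler characteristic of a vertex. -/
noncomputable def chiV (v : G.X) : ℤ :=
  2 - 2 * (G.gw v : ℤ) - (G.toPGraph.valence v : ℤ)

/-- The Euler characteristic of a (connected) weighted graph. -/
noncomputable def chi : ℤ := 2 - 2 * G.genus - (G.toPGraph.numLegs : ℤ)

end WGraph

/-- The ramification degree of a (finite) harmonic morphism of weighted graphs at `v'`. -/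
noncomputable def ram {G' G : WGraph} (φ : HarmonicHom G'.toPGraph G.toPGraph) (v' : G'.X) : ℤ :=
  (φ.deg v' : ℤ) * G.chiV (φ.toFun v') - G'.chiV v'

def Unramified {G' G : WGraph} (φ : HarmonicHom G'.toPGraph G.toPGraph) : Prop :=
  ∀ v', G'.toPGraph.IsVertex v' → ram φ v' = 0

def Effective {G' G : WGraph} (φ : HarmonicHom G'.toPGraph G.toPGraph) : Prop :=
  ∀ v', G'.toPGraph.IsVertex v' → 0 ≤ ram φ v'

/-- Two harmonic morphisms with the same target are isomorphic if there is an isomorphism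
of the weighted source graphs commuting with the morphisms and matching the degrees. -/
def CoverIso {B G1 G2 : WGraph} (φ1 : HarmonicHom G1.toPGraph B.toPGraph)
    (φ2 : HarmonicHom G2.toPGraph B.toPGraph) : Prop :=
  ∃ α : G1.X → G2.X, Function.Bijective α ∧
    (∀ x, α (G1.rt x) = G2.rt (α x)) ∧ (∀ x, α (G1.inv x) = G2.inv (α x)) ∧
    (∀ v, G1.toPGraph.IsVertex v → G2.gw (α v) = G1.gw v) ∧
    (∀ x, φ2.toFun (α x) = φ1.toFun x) ∧ (∀ x, φ2.deg (α x) = φ1.deg x)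

/-! ### Auxiliary lemmas -/

lemma mem_cfilter {α : Type*} {p : α → Prop} {s : Finset α} {a : α} :
    a ∈ cfilter p s ↔ a ∈ s ∧ p a := by
  unfold cfilter
  exact @Finset.mem_filter _ p (Classical.decPred p) s a

lemma cfilter_eq {α : Type*} (p : α → Prop) [DecidablePred p] (s : Finset α) :
    cfilter p s = s.filter p :=
  Finset.filter_congr_decidable s p (Classical.decPred p)

lemma cfilter_cfilter {α : Type*} (p q : α → Prop) (s : Finset α) :
    cfilter q (cfilter p s) = cfilter (fun a => p a ∧ q a) s := by
  ext a; simp [mem_cfilter, and_assoc]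

lemma card_cfilter_le_sum {α : Type*} (p : α → Prop) (s : Finset α) (f : α → ℕ)
    (hf : ∀ a ∈ cfilter p s, 1 ≤ f a) : (cfilter p s).card ≤ ∑ a ∈ cfilter p s, f a := by
  rw [Finset.card_eq_sum_ones]
  exact Finset.sum_le_sum hf

namespace PGraph

variable {G : PGraph}

lemma isVertex_rt (x : G.X) : G.IsVertex (G.rt x) := G.rt_idem x

lemma vertex_or_half (x : G.X) : G.IsVertex x ∨ G.IsHalf x := by
  by_cases h : G.rt x = x
  · exact Or.inl h
  · exact Or.inr h

lemma not_vertex_iff_half {x : G.X} : ¬ G.IsVertex x ↔ G.IsHalf x := Iff.rfl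

lemma inv_vertex {x : G.X} (h : G.IsVertex x) : G.inv x = x := by
  conv_lhs => rw [← h]
  rw [G.inv_fix_rt, h]

lemma mem_tangents {v h : G.X} : h ∈ G.tangents v ↔ G.IsHalf h ∧ G.rt h = v := by
  simp [PGraph.tangents, mem_cfilter]

lemma mem_vertexSet {x : G.X} : x ∈ G.vertexSet ↔ G.IsVertex x := by
  simp [PGraph.vertexSet, mem_cfilter]

/-- The set of half-edges as a `Finset`. -/
noncomputable def halfSet (G : PGraph) : Finset G.X :=
  cfilter (fun x => G.IsHalf x) Finset.univ

lemma mem_halfSet {x : G.X} : x ∈ G.halfSet ↔ G.IsHalf x := by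
  simp [PGraph.halfSet, mem_cfilter]

lemma card_split (G : PGraph) :
    G.vertexSet.card + G.halfSet.card = Fintype.card G.X := by
  have h1 : G.halfSet = Finset.univ \ G.vertexSet := by
    ext x
    simp [PGraph.mem_halfSet, PGraph.mem_vertexSet, PGraph.IsHalf, PGraph.IsVertex]
  have h2 : G.vertexSet.card ≤ Fintype.card G.X := by
    rw [← Finset.card_univ]; exact Finset.card_le_card (Finset.subset_univ _)
  rw [h1, Finset.card_sdiff_of_subset (Finset.subset_univ _), Finset.card_univ]
  omega

end PGraph

namespace HarmonicHom

variable {G' G : PGraph} (φ : HarmonicHom G' G)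

lemma toFun_vertex {v : G'.X} (hv : G'.IsVertex v) : G.IsVertex (φ.toFun v) := by
  rw [PGraph.IsVertex, ← φ.map_rt, hv]

lemma toFun_half (hfin : φ.Finite) {h : G'.X} (hh : G'.IsHalf h) :
    G.IsHalf (φ.toFun h) := by
  have := (φ.deg_zero_iff h hh).not.mp (hfin h hh).ne'
  exact this

lemma rt_toFun_half (hfin : φ.Finite) {h : G'.X} (hh : G'.IsHalf h) :
    G.rt (φ.toFun h) = φ.toFun (G'.rt h) := (φ.map_rt h).symm

lemma deg_le_deg_rt (hfin : φ.Finite) {h' : G'.X} (hh : G'.IsHalf h') :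
    φ.deg h' ≤ φ.deg (G'.rt h') := by
  have hv : G'.IsVertex (G'.rt h') := PGraph.isVertex_rt h'
  have hhG : G.IsHalf (φ.toFun h') := φ.toFun_half hfin hh
  have hrt : G.rt (φ.toFun h') = φ.toFun (G'.rt h') := (φ.map_rt h').symm
  rw [φ.harmonic (G'.rt h') hv (φ.toFun h') hhG hrt]
  refine Finset.single_le_sum (fun _ _ => Nat.zero_le _) ?_
  rw [mem_cfilter, PGraph.mem_tangents]
  exact ⟨⟨hh, rfl⟩, rfl⟩

lemma deg_vertex_le {d : ℕ}
    (hdeg : ∀ v, G.IsVertex v → φ.vertexFiberDeg v = d)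
    {v' : G'.X} (hv' : G'.IsVertex v') : φ.deg v' ≤ d := by
  rw [← hdeg _ (φ.toFun_vertex hv'), HarmonicHom.vertexFiberDeg]
  refine Finset.single_le_sum (fun _ _ => Nat.zero_le _) ?_
  rw [mem_cfilter]
  exact ⟨PGraph.mem_vertexSet.mpr hv', rfl⟩

lemma deg_vertex_pos (hfin : φ.Finite) (hG' : G'.Connected) {d : ℕ} (hd : 1 ≤ d)
    (hdeg : ∀ v, G.IsVertex v → φ.vertexFiberDeg v = d)
    {v' : G'.X} (hv' : G'.IsVertex v') : 1 ≤ φ.deg v' := by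
  by_contra hlt
  have h0 : φ.deg v' = 0 := by omega
  -- `v'` has no tangent directions
  have htan : G'.tangents v' = ∅ := by
    rw [Finset.eq_empty_iff_forall_notMem]
    intro h' hmem
    obtain ⟨hh', hr⟩ := PGraph.mem_tangents.mp hmem
    have hpos : 0 < φ.deg h' := hfin h' hh'
    have hhG : G.IsHalf (φ.toFun h') := φ.toFun_half hfin hh'
    have hrt : G.rt (φ.toFun h') = φ.toFun v' := by rw [← φ.map_rt, hr]
    have hsum := φ.harmonic v' hv' (φ.toFun h') hhG hrt
    have hle : φ.deg h' ≤ φ.deg v' := by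
      rw [hsum]
      refine Finset.single_le_sum (fun _ _ => Nat.zero_le _) ?_
      rw [mem_cfilter, PGraph.mem_tangents]
      exact ⟨⟨hh', hr⟩, rfl⟩
    omega
  -- connectedness forces `G'` to be a single vertex
  have hinv : G'.inv v' = v' := PGraph.inv_vertex hv'
  have key : ∀ a b : G'.X,
      Relation.EqvGen (fun a b => G'.rt a = b ∨ G'.inv a = b) a b → (a = v' ↔ b = v') := by
    intro a b h
    induction h with
    | rel a b hab =>
      constructor
      · intro ha'
        rcases hab with h | h
        · rw [← h, ha', hv']
        · rw [← h, ha', hinv]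
      · intro hb'
        rcases hab with h | h
        · rcases PGraph.vertex_or_half a with ha | ha
          · rw [← ha, h, hb']
          · exfalso
            have : a ∈ G'.tangents v' := PGraph.mem_tangents.mpr ⟨ha, h.trans hb'⟩
            rw [htan] at this
            exact absurd this (Finset.notMem_empty a)
        · rw [← G'.inv_invol a, h, hb', hinv]
    | refl a => exact Iff.rfl
    | symm a b _ ih => exact ih.symm
    | trans a b c _ _ ih1 ih2 => exact ih1.trans ih2
  have hall : ∀ y : G'.X, y = v' := fun y => (key y v' (hG'.2 y v')).mpr rfl
  have := hdeg (φ.toFun v') (φ.toFun_vertex hv')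
  rw [HarmonicHom.vertexFiberDeg] at this
  have hz : ∑ v'' ∈ cfilter (fun v'' => φ.toFun v'' = φ.toFun v') G'.vertexSet, φ.deg v'' = 0 := by
    refine Finset.sum_eq_zero fun x _ => ?_
    rw [hall x, h0]
  omega

lemma deg_le (hfin : φ.Finite) (hG' : G'.Connected) {d : ℕ} (hd : 1 ≤ d)
    (hdeg : ∀ v, G.IsVertex v → φ.vertexFiberDeg v = d) (x : G'.X) : φ.deg x ≤ d := by
  rcases PGraph.vertex_or_half x with hx | hx
  · exact φ.deg_vertex_le hdeg hx
  · exact le_trans (φ.deg_le_deg_rt hfin hx)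
      (φ.deg_vertex_le hdeg (PGraph.isVertex_rt x))

end HarmonicHom

namespace HarmonicHom

variable {G' G : PGraph} (φ : HarmonicHom G' G)

lemma card_vertexSet_le (hfin : φ.Finite) (hG' : G'.Connected) {d : ℕ} (hd : 1 ≤ d)
    (hdeg : ∀ v, G.IsVertex v → φ.vertexFiberDeg v = d) :
    G'.vertexSet.card ≤ Fintype.card G.X * d := by
  classical
  have h1 : G'.vertexSet.card ≤ ∑ v' ∈ G'.vertexSet, φ.deg v' := by
    rw [Finset.card_eq_sum_ones]
    exact Finset.sum_le_sum fun v' hv' =>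
      φ.deg_vertex_pos hfin hG' hd hdeg (PGraph.mem_vertexSet.mp hv')
  have h2 : ∑ v ∈ G.vertexSet, ∑ v' ∈ G'.vertexSet.filter (fun v' => φ.toFun v' = v), φ.deg v'
      = ∑ v' ∈ G'.vertexSet, φ.deg v' :=
    Finset.sum_fiberwise_of_maps_to
      (fun v' hv' => PGraph.mem_vertexSet.mpr (φ.toFun_vertex (PGraph.mem_vertexSet.mp hv')))
      φ.deg
  have h3 : ∀ v ∈ G.vertexSet,
      ∑ v' ∈ G'.vertexSet.filter (fun v' => φ.toFun v' = v), φ.deg v' = d := by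
    intro v hv
    rw [← cfilter_eq]
    exact hdeg v (PGraph.mem_vertexSet.mp hv)
  have h4 : ∑ v ∈ G.vertexSet, ∑ v' ∈ G'.vertexSet.filter (fun v' => φ.toFun v' = v), φ.deg v'
      = G.vertexSet.card * d := by
    rw [Finset.sum_congr rfl h3, Finset.sum_const, smul_eq_mul]
  have h5 : G.vertexSet.card ≤ Fintype.card G.X := by
    rw [← Finset.card_univ]; exact Finset.card_le_card (Finset.subset_univ _)
  calc G'.vertexSet.card ≤ ∑ v' ∈ G'.vertexSet, φ.deg v' := h1
    _ = G.vertexSet.card * d := by rw [← h2, h4]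
    _ ≤ Fintype.card G.X * d := Nat.mul_le_mul_right d h5

lemma card_tangents_le (hfin : φ.Finite) {d : ℕ}
    (hdeg : ∀ v, G.IsVertex v → φ.vertexFiberDeg v = d)
    {v' : G'.X} (hv' : G'.IsVertex v') :
    (G'.tangents v').card ≤ Fintype.card G.X * d := by
  classical
  have hmaps : ∀ h' ∈ G'.tangents v', φ.toFun h' ∈ G.tangents (φ.toFun v') := by
    intro h' hm
    obtain ⟨hh, hr⟩ := PGraph.mem_tangents.mp hm
    exact PGraph.mem_tangents.mpr ⟨φ.toFun_half hfin hh, by rw [← φ.map_rt, hr]⟩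
  have h1 : ∑ h ∈ G.tangents (φ.toFun v'),
      ∑ h' ∈ (G'.tangents v').filter (fun h' => φ.toFun h' = h), (1 : ℕ)
      = (G'.tangents v').card := by
    rw [Finset.sum_fiberwise_of_maps_to hmaps, Finset.card_eq_sum_ones]
  have h2 : ∀ h ∈ G.tangents (φ.toFun v'),
      ∑ h' ∈ (G'.tangents v').filter (fun h' => φ.toFun h' = h), (1 : ℕ) ≤ d := by
    intro h hm
    obtain ⟨hhG, hrG⟩ := PGraph.mem_tangents.mp hm
    have hsum := φ.harmonic v' hv' h hhG hrG
    have hle : ∑ h' ∈ (G'.tangents v').filter (fun h' => φ.toFun h' = h), (1 : ℕ)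
        ≤ ∑ h' ∈ cfilter (fun h' => φ.toFun h' = h) (G'.tangents v'), φ.deg h' := by
      rw [cfilter_eq]
      refine Finset.sum_le_sum fun h' hm' => ?_
      have := (PGraph.mem_tangents.mp (Finset.mem_filter.mp hm').1).1
      exact hfin h' this
    calc _ ≤ _ := hle
      _ = φ.deg v' := hsum.symm
      _ ≤ d := φ.deg_vertex_le hdeg hv'
  calc (G'.tangents v').card = _ := h1.symm
    _ ≤ ∑ _h ∈ G.tangents (φ.toFun v'), d := Finset.sum_le_sum h2
    _ = (G.tangents (φ.toFun v')).card * d := by rw [Finset.sum_const, smul_eq_mul]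
    _ ≤ Fintype.card G.X * d := by
        refine Nat.mul_le_mul_right d ?_
        rw [← Finset.card_univ]; exact Finset.card_le_card (Finset.subset_univ _)

lemma card_le (hfin : φ.Finite) (hG' : G'.Connected) {d : ℕ} (hd : 1 ≤ d)
    (hdeg : ∀ v, G.IsVertex v → φ.vertexFiberDeg v = d) :
    Fintype.card G'.X ≤
      Fintype.card G.X * d + (Fintype.card G.X * d) * (Fintype.card G.X * d) := by
  classical
  have hV := φ.card_vertexSet_le hfin hG' hd hdeg
  have hfib : ∀ v, (G'.halfSet.filter (fun h' => G'.rt h' = v)) = G'.tangents v := by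
    intro v
    ext h'
    simp only [Finset.mem_filter, PGraph.mem_halfSet, PGraph.mem_tangents]
  have hH : G'.halfSet.card = ∑ v ∈ G'.vertexSet, (G'.tangents v).card := by
    have h := Finset.sum_fiberwise_of_maps_to (s := G'.halfSet) (t := G'.vertexSet) (g := G'.rt)
      (fun h' _ => PGraph.mem_vertexSet.mpr (PGraph.isVertex_rt h')) (fun _ => (1 : ℕ))
    calc G'.halfSet.card = ∑ _h' ∈ G'.halfSet, 1 := Finset.card_eq_sum_ones _
      _ = ∑ v ∈ G'.vertexSet, ∑ _h' ∈ G'.halfSet.filter (fun h' => G'.rt h' = v), 1 := h.symm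
      _ = ∑ v ∈ G'.vertexSet, (G'.tangents v).card := by
          refine Finset.sum_congr rfl fun v hv => ?_
          rw [hfib v, ← Finset.card_eq_sum_ones]
  have hH2 : G'.halfSet.card ≤ G'.vertexSet.card * (Fintype.card G.X * d) := by
    rw [hH]
    calc ∑ v ∈ G'.vertexSet, (G'.tangents v).card
        ≤ ∑ _v ∈ G'.vertexSet, Fintype.card G.X * d :=
          Finset.sum_le_sum fun v hv =>
            φ.card_tangents_le hfin hdeg (PGraph.mem_vertexSet.mp hv)
      _ = G'.vertexSet.card * (Fintype.card G.X * d) := by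
          rw [Finset.sum_const, smul_eq_mul]
  have hsplit := PGraph.card_split G'
  have := Nat.mul_le_mul hV (le_refl (Fintype.card G.X * d))
  nlinarith [hV, hH2, hsplit]

end HarmonicHom

lemma gw_le_of_unramified {G' G : WGraph} (φ : HarmonicHom G'.toPGraph G.toPGraph)
    (hunram : Unramified φ) {d : ℕ} (hdegle : ∀ x, φ.deg x ≤ d)
    {v' : G'.X} (hv' : G'.toPGraph.IsVertex v') :
    G'.gw v' ≤ 1 + d * ((∑ x, G.gw x) + Fintype.card G.X) := by
  have h0 := hunram v' hv'
  rw [ram, sub_eq_zero, WGraph.chiV, WGraph.chiV] at h0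
  set D : ℤ := (φ.deg v' : ℤ) with hD
  set gB : ℤ := (G.gw (φ.toFun v') : ℤ) with hgB
  set vB : ℤ := (G.toPGraph.valence (φ.toFun v') : ℤ) with hvB
  set g' : ℤ := (G'.gw v' : ℤ) with hg'
  set val' : ℤ := (G'.toPGraph.valence v' : ℤ) with hval'
  set A : ℤ := ((∑ x, G.gw x : ℕ) : ℤ) with hA
  set B : ℤ := ((Fintype.card G.X : ℕ) : ℤ) with hB
  have hD0 : (0:ℤ) ≤ D := Int.natCast_nonneg _
  have hDd : D ≤ (d:ℤ) := by rw [hD]; exact_mod_cast hdegle v'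
  have hgB0 : (0:ℤ) ≤ gB := Int.natCast_nonneg _
  have hgBA : gB ≤ A := by
    rw [hgB, hA]
    exact_mod_cast Finset.single_le_sum (f := fun x => G.gw x)
      (fun _ _ => Nat.zero_le _) (Finset.mem_univ (φ.toFun v'))
  have hvB0 : (0:ℤ) ≤ vB := Int.natCast_nonneg _
  have hvBB : vB ≤ B := by
    rw [hvB, hB]
    have : G.toPGraph.valence (φ.toFun v') ≤ Fintype.card G.X := by
      rw [PGraph.valence, ← Finset.card_univ]
      exact Finset.card_le_card (Finset.subset_univ _)
    exact_mod_cast this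
  have hval'0 : (0:ℤ) ≤ val' := Int.natCast_nonneg _
  have hA0 : (0:ℤ) ≤ A := Int.natCast_nonneg _
  have hB0 : (0:ℤ) ≤ B := Int.natCast_nonneg _
  have h5 : D * (2*gB + vB - 2) ≤ (d:ℤ) * (2*(A+B)) := by
    have e1 : (2*gB + vB - 2 : ℤ) ≤ 2*(A+B) := by linarith
    have e2 : (0:ℤ) ≤ 2*(A+B) := by linarith
    calc D * (2*gB + vB - 2) ≤ D * (2*(A+B)) := by
          rcases le_or_gt 0 (2*gB + vB - 2) with h | h
          · exact mul_le_mul_of_nonneg_left e1 hD0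
          · nlinarith
      _ ≤ (d:ℤ) * (2*(A+B)) := mul_le_mul_of_nonneg_right hDd e2
  have hfin : g' ≤ 1 + (d:ℤ) * (A + B) := by nlinarith [h0, h5, hval'0]
  have h6 := hfin
  rw [hg', hA, hB] at h6
  exact_mod_cast h6

/-! ### A finite encoding of bounded covers -/

/-- A bounded datum: candidate data for a cover of `G` with at most `N` elements,
degrees at most `d` and genera at most `K`. -/
structure Datum (G : WGraph) (d K N : ℕ) where
  m : Fin (N+1)
  rtF : Fin m → Fin m
  invF : Fin m → Fin m
  gwF : Fin m → Fin (K+1)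
  fF : Fin m → G.X
  dgF : Fin m → Fin (d+1)

/-- The data of a `Datum` as an iterated sigma/product type. -/
def datumEquiv (G : WGraph) (d K N : ℕ) :
    Datum G d K N ≃ Σ m : Fin (N+1),
      (Fin m → Fin m) × (Fin m → Fin m) × (Fin m → Fin (K+1)) × (Fin m → G.X) ×
        (Fin m → Fin (d+1)) where
  toFun t := ⟨t.m, t.rtF, t.invF, t.gwF, t.fF, t.dgF⟩
  invFun s := ⟨s.1, s.2.1, s.2.2.1, s.2.2.2.1, s.2.2.2.2.1, s.2.2.2.2.2⟩
  left_inv t := rfl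
  right_inv s := rfl

noncomputable instance (G : WGraph) (d K N : ℕ) : Fintype (Datum G d K N) :=
  Fintype.ofEquiv _ (datumEquiv G d K N).symm

/-- A datum is good if it satisfies all the axioms of an unramified cover data. -/
structure GoodDatum {G : WGraph} {d K N : ℕ} (t : Datum G d K N) : Prop where
  h1 : ∀ x, t.rtF (t.rtF x) = t.rtF x
  h2 : ∀ x, t.invF (t.invF x) = x
  h3 : ∀ x, t.invF (t.rtF x) = t.rtF x
  h4 : ∀ x, t.fF (t.rtF x) = G.rt (t.fF x)
  h5 : ∀ x, t.fF (t.invF x) = G.inv (t.fF x)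
  h6 : ∀ h, t.rtF h ≠ h → t.invF h ≠ h → ¬ G.toPGraph.IsLeg (t.fF h)
  h7 : ∀ h, t.rtF h ≠ h → t.invF h ≠ h → (t.dgF (t.invF h) : ℕ) = (t.dgF h : ℕ)
  h8 : ∀ h, t.rtF h ≠ h → ((t.dgF h : ℕ) = 0 ↔ G.toPGraph.IsVertex (t.fF h))
  h9 : ∀ v, t.rtF v = v → ∀ h, G.toPGraph.IsHalf h → G.rt h = t.fF v →
    (t.dgF v : ℕ) = ∑ h' ∈ cfilter
      (fun h' => (t.rtF h' ≠ h' ∧ t.rtF h' = v) ∧ t.fF h' = h) Finset.univ,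
      (t.dgF h' : ℕ)

/-- The weighted graph built from a good datum. -/
def buildW {G : WGraph} {d K N : ℕ} (t : Datum G d K N) (h : GoodDatum t) : WGraph where
  X := Fin t.m
  rt := t.rtF
  inv := t.invF
  rt_idem := h.h1
  inv_invol := h.h2
  inv_fix_rt := h.h3
  gw x := (t.gwF x : ℕ)

/-- The harmonic morphism built from a good datum. -/
noncomputable def buildHom {G : WGraph} {d K N : ℕ} (t : Datum G d K N) (h : GoodDatum t) :
    HarmonicHom (buildW t h).toPGraph G.toPGraph where
  toFun := t.fF
  map_rt := h.h4
  map_inv := h.h5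
  edge_not_leg := fun x hx => h.h6 x hx.1 hx.2
  deg x := (t.dgF x : ℕ)
  deg_edge := fun x hx => h.h7 x hx.1 hx.2
  deg_zero_iff := fun x hx => h.h8 x hx
  harmonic := by
    intro v hv hh hhG hrt
    have := h.h9 v hv hh hhG hrt
    rw [PGraph.tangents, cfilter_cfilter]
    exact this

/-- The identity cover of a weighted graph. -/
noncomputable def idCover (G : WGraph) : HarmonicHom G.toPGraph G.toPGraph where
  toFun := id
  map_rt _ := rfl
  map_inv _ := rfl
  edge_not_leg := fun h hh hl => hh.2 hl.2
  deg _ := 1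
  deg_edge _ _ := rfl
  deg_zero_iff := fun h hh => iff_of_false one_ne_zero hh
  harmonic := by
    intro v hv h hh hrh
    have hmem : h ∈ G.toPGraph.tangents v := PGraph.mem_tangents.mpr ⟨hh, hrh⟩
    have : cfilter (fun h' => id h' = h) (G.toPGraph.tangents v) = {h} := by
      ext a
      simp only [mem_cfilter, Finset.mem_singleton, id]
      exact ⟨fun q => q.2, fun q => ⟨q ▸ hmem, q⟩⟩
    rw [this, Finset.sum_singleton]

/-- Packaging: a weighted graph together with a harmonic morphism onto `G`. -/
def Pack (G : WGraph) := Σ G' : WGraph, HarmonicHom G'.toPGraph G.toPGraph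

open Classical in
/-- The cover associated to a datum (the identity cover for bad data). -/
noncomputable def packOf {G : WGraph} {d K N : ℕ} (t : Datum G d K N) : Pack G :=
  if h : GoodDatum t then ⟨buildW t h, buildHom t h⟩ else ⟨G, idCover G⟩

lemma packOf_eq {G : WGraph} {d K N : ℕ} {t : Datum G d K N} (h : GoodDatum t) :
    packOf t = ⟨buildW t h, buildHom t h⟩ := dif_pos h
/-- Let `(G,g)` be a connected weighted graph and `d ≥ 1`.  Up to
isomorphism there are only finitely many unramified finite harmonic morphisms
`φ : (G',g') → (G,g)` of degree `d` with `G'` connected: there is a finite family of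
such morphisms such that every one is isomorphic to a member of the family. -/
theorem finitely_many_unramified_covers
    (G : WGraph) (hG : G.toPGraph.Connected) (d : ℕ) (hd : 1 ≤ d) :
    ∃ (n : ℕ) (Gs : Fin n → WGraph)
      (φs : ∀ i, HarmonicHom (Gs i).toPGraph G.toPGraph),
      ∀ (G' : WGraph), G'.toPGraph.Connected →
        ∀ φ : HarmonicHom G'.toPGraph G.toPGraph,
          φ.Finite → Unramified φ →
          (∀ v, G.toPGraph.IsVertex v → φ.vertexFiberDeg v = d) →
          ∃ i, CoverIso φ (φs i) := by
  classical
  set B := Fintype.card G.X with hB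
  set A := ∑ x, G.gw x with hA
  set K := 1 + d * (A + B) with hK
  set N := B * d + (B * d) * (B * d) with hN
  set eqv := Fintype.equivFin (Datum G d K N) with heqv
  refine ⟨Fintype.card (Datum G d K N),
    fun i => (packOf (eqv.symm i)).1,
    fun i => (packOf (eqv.symm i)).2, ?_⟩
  intro G' hG' φ hfin hunram hdeg
  have hcard : Fintype.card G'.X ≤ N := φ.card_le hfin hG' hd hdeg
  have hdegle : ∀ x, φ.deg x ≤ d := φ.deg_le hfin hG' hd hdeg
  have hgwle : ∀ v', G'.toPGraph.IsVertex v' → G'.gw v' ≤ K := fun v' hv' =>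
    gw_le_of_unramified φ hunram hdegle hv'
  set e : G'.X ≃ Fin (Fintype.card G'.X) := Fintype.equivFin G'.X with he
  set t : Datum G d K N :=
    { m := ⟨Fintype.card G'.X, Nat.lt_succ_of_le hcard⟩
      rtF := fun x => e (G'.rt (e.symm x))
      invF := fun x => e (G'.inv (e.symm x))
      gwF := fun x => ⟨min (if G'.toPGraph.IsVertex (e.symm x) then G'.gw (e.symm x) else 0) K,
        Nat.lt_succ_of_le (Nat.min_le_right _ _)⟩
      fF := fun x => φ.toFun (e.symm x)
      dgF := fun x => ⟨min (φ.deg (e.symm x)) d,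
        Nat.lt_succ_of_le (Nat.min_le_right _ _)⟩ } with ht
  have hrtF : ∀ x, t.rtF x = e (G'.rt (e.symm x)) := fun _ => rfl
  have hinvF : ∀ x, t.invF x = e (G'.inv (e.symm x)) := fun _ => rfl
  have hfF : ∀ x, t.fF x = φ.toFun (e.symm x) := fun _ => rfl
  have hdgF : ∀ x, (t.dgF x : ℕ) = φ.deg (e.symm x) := fun x =>
    min_eq_left (hdegle _)
  have hgwF : ∀ x, G'.toPGraph.IsVertex (e.symm x) → (t.gwF x : ℕ) = G'.gw (e.symm x) := by
    intro x hx
    show min (if G'.toPGraph.IsVertex (e.symm x) then G'.gw (e.symm x) else 0) K = _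
    rw [if_pos hx]
    exact min_eq_left (hgwle _ hx)
  -- auxiliary translations
  have hne : ∀ x : Fin (Fintype.card G'.X), t.rtF x ≠ x ↔ G'.IsHalf (e.symm x) := by
    intro x
    rw [hrtF, PGraph.IsHalf]
    constructor
    · intro hne heq
      exact hne (by rw [heq, Equiv.apply_symm_apply])
    · intro hne heq
      apply hne
      have := congrArg e.symm heq
      rwa [Equiv.symm_apply_apply] at this
  have hni : ∀ x : Fin (Fintype.card G'.X), t.invF x ≠ x ↔ G'.inv (e.symm x) ≠ e.symm x := by
    intro x
    rw [hinvF]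
    constructor
    · intro hne heq
      exact hne (by rw [heq, Equiv.apply_symm_apply])
    · intro hne heq
      apply hne
      have := congrArg e.symm heq
      rwa [Equiv.symm_apply_apply] at this
  have hGood : GoodDatum t := by
    constructor
    · intro x
      rw [hrtF, hrtF, Equiv.symm_apply_apply, G'.rt_idem]
    · intro x
      rw [hinvF, hinvF, Equiv.symm_apply_apply, G'.inv_invol, Equiv.apply_symm_apply]
    · intro x
      rw [hrtF, hinvF, Equiv.symm_apply_apply, G'.inv_fix_rt]
    · intro x
      rw [hfF, hrtF, Equiv.symm_apply_apply, φ.map_rt]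
    · intro x
      rw [hfF, hinvF, Equiv.symm_apply_apply, φ.map_inv]
    · intro h hr hi
      rw [hfF]
      exact φ.edge_not_leg (e.symm h) ⟨(hne h).mp hr, (hni h).mp hi⟩
    · intro h hr hi
      rw [hdgF, hdgF, hinvF, Equiv.symm_apply_apply]
      exact φ.deg_edge (e.symm h) ⟨(hne h).mp hr, (hni h).mp hi⟩
    · intro h hr
      rw [hdgF, hfF]
      exact φ.deg_zero_iff (e.symm h) ((hne h).mp hr)
    · intro v hv h hh hrh
      have hv' : G'.toPGraph.IsVertex (e.symm v) := by
        rw [PGraph.IsVertex]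
        have hv0 : e (G'.rt (e.symm v)) = v := (hrtF v) ▸ hv
        have := congrArg e.symm hv0
        rwa [Equiv.symm_apply_apply] at this
      have hrh' : G.rt h = φ.toFun (e.symm v) := by rw [hrh, hfF]
      have hsum := φ.harmonic (e.symm v) hv' h hh hrh'
      rw [PGraph.tangents, cfilter_cfilter] at hsum
      rw [hdgF]
      refine hsum.trans ?_
      refine Finset.sum_equiv e ?_ ?_
      · intro i
        rw [mem_cfilter, mem_cfilter]
        simp only [Finset.mem_univ, true_and, hrtF, hfF, Equiv.symm_apply_apply,
          PGraph.IsHalf]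
        have k1 : e (G'.rt i) ≠ e i ↔ G'.rt i ≠ i := (Equiv.injective e).ne_iff
        have k2 : e (G'.rt i) = v ↔ G'.rt i = e.symm v :=
          Equiv.apply_eq_iff_eq_symm_apply e
        rw [k1, k2]
      · intro i _
        rw [hdgF, Equiv.symm_apply_apply]
  refine ⟨eqv t, ?_⟩
  show CoverIso φ (packOf (eqv.symm (eqv t))).2
  have hpack : packOf (eqv.symm (eqv t)) = ⟨buildW t hGood, buildHom t hGood⟩ := by
    rw [Equiv.symm_apply_apply]
    exact packOf_eq hGood
  rw [hpack]
  refine ⟨fun x => e x, e.bijective, ?_, ?_, ?_, ?_, ?_⟩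
  · intro x
    show e (G'.rt x) = t.rtF (e x)
    rw [hrtF, Equiv.symm_apply_apply]
  · intro x
    show e (G'.inv x) = t.invF (e x)
    rw [hinvF, Equiv.symm_apply_apply]
  · intro v hv
    show (t.gwF (e v) : ℕ) = G'.gw v
    rw [hgwF (e v) (by rwa [Equiv.symm_apply_apply]), Equiv.symm_apply_apply]
  · intro x
    show t.fF (e x) = φ.toFun x
    rw [hfF, Equiv.symm_apply_apply]
  · intro x
    show (t.dgF (e x) : ℕ) = φ.deg x
    rw [hdgF, Equiv.symm_apply_apply]

end TropDR
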